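/- arXiv:2301.09891 — 4 statements merged into one kernel-verified Lean document; each statement's English description precedes it below -/
import Mathlib

section
/- If φ satisfies ‖φ − √π‖_{L²} ≤ ε and τ ≤ ‖φ − √π‖²_{L²}, then the function √π̂ with π̂(x) = φ(x)² + τλ(x), where λ is a probability density, satisfies ‖√π̂ − √π‖_{L²} ≤ √2 ε. -/
open MeasureTheory Real

lemma ptwise (a b p : ℝ) (hb : 0 ≤ b) (hp : 0 ≤ p) :
    (Real.sqrt (a ^ 2 + b) - p) ^ 2 ≤ (a - p) ^ 2 + b := by
  have h1 : 0 ≤ a ^ 2 + b := by positivity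
  have h2 : Real.sqrt (a ^ 2 + b) ^ 2 = a ^ 2 + b := Real.sq_sqrt h1
  have h3 : a ≤ Real.sqrt (a ^ 2 + b) := by
    calc a ≤ |a| := le_abs_self a
    _ = Real.sqrt (a ^ 2) := by rw [Real.sqrt_sq_eq_abs]
    _ ≤ Real.sqrt (a ^ 2 + b) := Real.sqrt_le_sqrt (by linarith)
  nlinarith [mul_le_mul_of_nonneg_left h3 hp]

/-- Squared-TT defensive approximation error: if `‖φ - √pi‖_{L²} ≤ ε` and
`τ ≤ ‖φ - √pi‖²_{L²}`, then `piHat = φ² + τ·lam` (with `lam` a probability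
density) satisfies `‖√piHat - √pi‖_{L²} ≤ √2 ε`. -/
theorem stmt0 {m : ℕ} (pi φ lam : (Fin m → ℝ) → ℝ) (ε τ : ℝ)
    (hpi : ∀ x, 0 ≤ pi x) (hpiint : Integrable pi)
    (hlam : ∀ x, 0 ≤ lam x) (hlamint : ∫ x, lam x = 1)
    (hφ : Integrable (fun x => (φ x - Real.sqrt (pi x)) ^ 2))
    (hε : 0 < ε) (hτ : 0 ≤ τ)
    (herr : Real.sqrt (∫ x, (φ x - Real.sqrt (pi x)) ^ 2) ≤ ε)
    (hτle : τ ≤ ∫ x, (φ x - Real.sqrt (pi x)) ^ 2) :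
    Real.sqrt (∫ x, (Real.sqrt ((φ x) ^ 2 + τ * lam x) - Real.sqrt (pi x)) ^ 2)
      ≤ Real.sqrt 2 * ε := by
  have hlamI : Integrable lam := by
    by_contra h
    rw [integral_undef h] at hlamint
    norm_num at hlamint
  set I := ∫ x, (φ x - Real.sqrt (pi x)) ^ 2 with hI
  have hInn : 0 ≤ I := integral_nonneg fun x => by positivity
  have hIle : I ≤ ε ^ 2 := by
    have := Real.sqrt_le_sqrt (le_of_eq (Real.sq_sqrt hInn).symm)
    calc I = Real.sqrt I ^ 2 := (Real.sq_sqrt hInn).symm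
    _ ≤ ε ^ 2 := by
      apply pow_le_pow_left₀ (Real.sqrt_nonneg _) herr
  have hgint : Integrable (fun x => (φ x - Real.sqrt (pi x)) ^ 2 + τ * lam x) :=
    hφ.add (hlamI.const_mul τ)
  have hmono : (∫ x, (Real.sqrt ((φ x) ^ 2 + τ * lam x) - Real.sqrt (pi x)) ^ 2)
      ≤ ∫ x, ((φ x - Real.sqrt (pi x)) ^ 2 + τ * lam x) := by
    apply integral_mono_of_nonneg
    · exact Filter.Eventually.of_forall fun x => by positivity
    · exact hgint
    · exact Filter.Eventually.of_forall fun x =>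
        ptwise (φ x) (τ * lam x) (Real.sqrt (pi x))
          (mul_nonneg hτ (hlam x)) (Real.sqrt_nonneg _)
  have hsplit : (∫ x, ((φ x - Real.sqrt (pi x)) ^ 2 + τ * lam x)) = I + τ := by
    rw [integral_add hφ (hlamI.const_mul τ), integral_const_mul, hlamint, mul_one]
  have hfinal : (∫ x, (Real.sqrt ((φ x) ^ 2 + τ * lam x) - Real.sqrt (pi x)) ^ 2)
      ≤ 2 * ε ^ 2 := by
    calc _ ≤ I + τ := by rw [← hsplit]; exact hmono
    _ ≤ I + I := by linarith
    _ ≤ 2 * ε ^ 2 := by linarith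
  calc Real.sqrt (∫ x, (Real.sqrt ((φ x) ^ 2 + τ * lam x) - Real.sqrt (pi x)) ^ 2)
      ≤ Real.sqrt (2 * ε ^ 2) := Real.sqrt_le_sqrt hfinal
  _ = Real.sqrt 2 * ε := by
      rw [Real.sqrt_mul (by norm_num), Real.sqrt_sq hε.le]
end

section
/- Let p = π/z and p̂ = π̂/ẑ be normalized densities with z = ∫π and ẑ = ∫π̂. Then the Hellinger distance satisfies d_H(p̂, p) ≤ (√2/√z)·‖√π̂ − √π‖_{L²}. -/
open MeasureTheory Real

lemma l2_norm_toLp_eq {α} [MeasurableSpace α] {μ : Measure α} {f : α → ℝ}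
    (hf : MemLp f 2 μ) :
    ‖hf.toLp f‖ = Real.sqrt (∫ x, f x ^ 2 ∂μ) := by
  have h1 : (inner ℝ (hf.toLp f) (hf.toLp f) : ℝ) = ∫ x, f x ^ 2 ∂μ := by
    rw [MeasureTheory.L2.inner_def]
    apply integral_congr_ae
    filter_upwards [hf.coeFn_toLp] with x hx
    simp [hx, sq, RCLike.inner_apply]
  rw [← h1, real_inner_self_eq_norm_sq]
  exact (Real.sqrt_sq (norm_nonneg _)).symm

/-- Hellinger distance between normalized densities `p = pi/z` and
`pHat = piHat/zHat` is bounded by `(√2/√z)·‖√piHat − √pi‖_{L²}`, where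
`d_H(pHat,p) = (1/√2)·‖√pHat − √p‖_{L²}`. -/
theorem stmt1 {m : ℕ} (pi piHat : (Fin m → ℝ) → ℝ)
    (hpi : ∀ x, 0 ≤ pi x) (hpiHat : ∀ x, 0 ≤ piHat x)
    (hpiint : Integrable pi) (hpiHatint : Integrable piHat)
    (z zHat : ℝ) (hz : z = ∫ x, pi x) (hzHat : zHat = ∫ x, piHat x)
    (hzpos : 0 < z) (hzHatpos : 0 < zHat) :
    (1 / Real.sqrt 2) *
        Real.sqrt (∫ x, (Real.sqrt (piHat x / zHat) - Real.sqrt (pi x / z)) ^ 2)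
      ≤ (Real.sqrt 2 / Real.sqrt z) *
        Real.sqrt (∫ x, (Real.sqrt (piHat x) - Real.sqrt (pi x)) ^ 2) := by
  set f : (Fin m → ℝ) → ℝ := fun x => Real.sqrt (piHat x) with hfdef
  set g : (Fin m → ℝ) → ℝ := fun x => Real.sqrt (pi x) with hgdef
  have hfm : AEStronglyMeasurable f volume :=
    (Real.continuous_sqrt.comp_aestronglyMeasurable hpiHatint.aestronglyMeasurable)
  have hgm : AEStronglyMeasurable g volume :=
    (Real.continuous_sqrt.comp_aestronglyMeasurable hpiint.aestronglyMeasurable)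
  have hf2 : MemLp f 2 volume := by
    rw [memLp_two_iff_integrable_sq hfm]
    refine hpiHatint.congr ?_
    exact Filter.Eventually.of_forall fun x => (Real.sq_sqrt (hpiHat x)).symm
  have hg2 : MemLp g 2 volume := by
    rw [memLp_two_iff_integrable_sq hgm]
    refine hpiint.congr ?_
    exact Filter.Eventually.of_forall fun x => (Real.sq_sqrt (hpi x)).symm
  set F := hf2.toLp f with hF
  set G := hg2.toLp g with hG
  set c : ℝ := (Real.sqrt zHat)⁻¹ with hc
  set d : ℝ := (Real.sqrt z)⁻¹ with hd
  have hsz : (0:ℝ) < Real.sqrt z := Real.sqrt_pos.mpr hzpos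
  have hszh : (0:ℝ) < Real.sqrt zHat := Real.sqrt_pos.mpr hzHatpos
  -- norms of F and G
  have hnF : ‖F‖ = Real.sqrt zHat := by
    rw [hF, l2_norm_toLp_eq]
    congr 1
    rw [hzHat]
    exact integral_congr_ae (Filter.Eventually.of_forall fun x => Real.sq_sqrt (hpiHat x))
  have hnG : ‖G‖ = Real.sqrt z := by
    rw [hG, l2_norm_toLp_eq]
    congr 1
    rw [hz]
    exact integral_congr_ae (Filter.Eventually.of_forall fun x => Real.sq_sqrt (hpi x))
  -- RHS integral equals ‖F - G‖
  have hFG : ‖F - G‖ = Real.sqrt (∫ x, (Real.sqrt (piHat x) - Real.sqrt (pi x)) ^ 2) := by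
    rw [hF, hG, ← MemLp.toLp_sub, l2_norm_toLp_eq]
    rfl
  -- LHS integral equals ‖c • F - d • G‖
  have hcd : ‖c • F - d • G‖
      = Real.sqrt (∫ x, (Real.sqrt (piHat x / zHat) - Real.sqrt (pi x / z)) ^ 2) := by
    rw [hF, hG, ← MemLp.toLp_const_smul c, ← MemLp.toLp_const_smul d, ← MemLp.toLp_sub,
      l2_norm_toLp_eq]
    congr 1
    apply integral_congr_ae
    apply Filter.Eventually.of_forall
    intro x
    have h1 : Real.sqrt (piHat x / zHat) = c * f x := by
      rw [Real.sqrt_div (hpiHat x), hc, div_eq_inv_mul]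
    have h2 : Real.sqrt (pi x / z) = d * g x := by
      rw [Real.sqrt_div (hpi x), hd, div_eq_inv_mul]
    simp [h1, h2, Pi.sub_apply, Pi.smul_apply, smul_eq_mul]
  -- key inequality
  have habs : |c - d| * ‖F‖ ≤ d * ‖F - G‖ := by
    have e1 : (c - d) * Real.sqrt zHat = (Real.sqrt z - Real.sqrt zHat) / Real.sqrt z := by
      rw [hc, hd]
      field_simp
    have e2 : |c - d| * ‖F‖ = |Real.sqrt z - Real.sqrt zHat| * d := by
      have e2' : |c - d| * Real.sqrt zHat = |(c - d) * Real.sqrt zHat| := by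
        rw [abs_mul, abs_of_nonneg hszh.le]
      rw [hnF, e2', e1, abs_div, abs_of_nonneg hsz.le, hd, div_eq_mul_inv]
    rw [e2]
    have e3 : |Real.sqrt z - Real.sqrt zHat| ≤ ‖F - G‖ := by
      rw [← hnG, ← hnF]
      calc |‖G‖ - ‖F‖| ≤ ‖G - F‖ := abs_norm_sub_norm_le G F
        _ = ‖F - G‖ := norm_sub_rev G F
    calc |Real.sqrt z - Real.sqrt zHat| * d ≤ ‖F - G‖ * d :=
          mul_le_mul_of_nonneg_right e3 (by rw [hd]; positivity)
      _ = d * ‖F - G‖ := mul_comm _ _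
  have key : ‖c • F - d • G‖ ≤ 2 / Real.sqrt z * ‖F - G‖ := by
    have hsplit : c • F - d • G = d • (F - G) + (c - d) • F := by
      rw [smul_sub, sub_smul]; abel
    calc ‖c • F - d • G‖ ≤ ‖d • (F - G)‖ + ‖(c - d) • F‖ := by
          rw [hsplit]; exact norm_add_le _ _
      _ = d * ‖F - G‖ + |c - d| * ‖F‖ := by
          rw [norm_smul, norm_smul, Real.norm_eq_abs, Real.norm_eq_abs,
            abs_of_nonneg (le_of_lt (by rw [hd]; positivity))]
      _ ≤ d * ‖F - G‖ + d * ‖F - G‖ := by linarith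
      _ = 2 / Real.sqrt z * ‖F - G‖ := by rw [hd]; ring
  rw [← hcd, ← hFG]
  have hs2 : (0:ℝ) < Real.sqrt 2 := Real.sqrt_pos.mpr (by norm_num)
  have h2 : Real.sqrt 2 * Real.sqrt 2 = 2 := Real.mul_self_sqrt (by norm_num)
  calc (1 / Real.sqrt 2) * ‖c • F - d • G‖
      ≤ (1 / Real.sqrt 2) * (2 / Real.sqrt z * ‖F - G‖) :=
        mul_le_mul_of_nonneg_left key (by positivity)
    _ = (1 / Real.sqrt 2) * ((Real.sqrt 2 * Real.sqrt 2) / Real.sqrt z * ‖F - G‖) := by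
        rw [h2]
    _ = (Real.sqrt 2 / Real.sqrt z) * ‖F - G‖ := by
        field_simp
end

section
/- Under the same setting, with r(x',θ) = ∫ f(x|x',θ)g(x)dx ≤ C, the square roots satisfy ‖√q_t − √π_t‖_{L²} ≤ √C · ‖√π̂ − √π‖_{L²}, where q_t(x,θ,x') = π̂(x',θ)f(x|x',θ)g(x) and π_t(x,θ,x') = π(x',θ)f(x|x',θ)g(x). -/
open MeasureTheory

private lemma sqrt_mul_sub_sq (a b c : ℝ) (ha : 0 ≤ a) (hb : 0 ≤ b) (hc : 0 ≤ c) :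
    (Real.sqrt (a * c) - Real.sqrt (b * c)) ^ 2 = (Real.sqrt a - Real.sqrt b) ^ 2 * c := by
  rw [Real.sqrt_mul ha, Real.sqrt_mul hb, ← sub_mul, mul_pow, Real.sq_sqrt hc]

/-- L² propagation bound for square roots: with
`q_t(x,θ,x') = piHat(x',θ) f(x|x',θ) g(x)` and
`pi_t(x,θ,x') = pi(x',θ) f(x|x',θ) g(x)` and
`sup_{x',θ} ∫ f(x|x',θ) g(x) dx ≤ C`, we have
`‖√q_t − √pi_t‖_{L²} ≤ √C ‖√piHat − √pi‖_{L²}`. -/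
theorem stmt6 {X Θ : Type*} [MeasurableSpace X] [MeasurableSpace Θ]
    (μ : Measure X) (ν : Measure Θ) [SigmaFinite μ] [SigmaFinite ν]
    (f : X → X → Θ → ℝ) (g : X → ℝ) (C : ℝ)
    (hf0 : ∀ x x' θ, 0 ≤ f x x' θ) (hg0 : ∀ x, 0 ≤ g x)
    (hC : ∀ x' θ, ∫ x, f x x' θ * g x ∂μ ≤ C)
    (hfgint : ∀ x' θ, Integrable (fun x => f x x' θ * g x) μ)
    (pi piHat : X × Θ → ℝ)
    (hpi0 : ∀ p, 0 ≤ pi p) (hpiHat0 : ∀ p, 0 ≤ piHat p)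
    (hpi : Integrable pi (μ.prod ν)) (hpiHat : Integrable piHat (μ.prod ν))
    (hqint : Integrable
      (fun p : X × Θ × X =>
        (Real.sqrt (piHat (p.2.2, p.2.1) * f p.1 p.2.2 p.2.1 * g p.1)
          - Real.sqrt (pi (p.2.2, p.2.1) * f p.1 p.2.2 p.2.1 * g p.1)) ^ 2)
      (μ.prod (ν.prod μ))) :
    Real.sqrt (∫ p : X × Θ × X,
        (Real.sqrt (piHat (p.2.2, p.2.1) * f p.1 p.2.2 p.2.1 * g p.1)
          - Real.sqrt (pi (p.2.2, p.2.1) * f p.1 p.2.2 p.2.1 * g p.1)) ^ 2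
        ∂(μ.prod (ν.prod μ)))
      ≤ Real.sqrt C *
        Real.sqrt (∫ p, (Real.sqrt (piHat p) - Real.sqrt (pi p)) ^ 2
          ∂(μ.prod ν)) := by
  rcases isEmpty_or_nonempty X with hX | hX
  · rw [integral_of_isEmpty, Real.sqrt_zero]
    positivity
  rcases isEmpty_or_nonempty Θ with hΘ | hΘ
  · rw [integral_of_isEmpty, Real.sqrt_zero]
    positivity
  -- C is nonnegative
  have hC0 : 0 ≤ C := by
    obtain ⟨x'⟩ := hX; obtain ⟨θ⟩ := hΘ
    exact le_trans (integral_nonneg fun x => mul_nonneg (hf0 x x' θ) (hg0 x)) (hC x' θ)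
  -- notation
  set Q : X × Θ × X → ℝ := fun p =>
    (Real.sqrt (piHat (p.2.2, p.2.1) * f p.1 p.2.2 p.2.1 * g p.1)
      - Real.sqrt (pi (p.2.2, p.2.1) * f p.1 p.2.2 p.2.1 * g p.1)) ^ 2 with hQ
  set s : X × Θ → ℝ := fun p => (Real.sqrt (piHat p) - Real.sqrt (pi p)) ^ 2 with hs
  have hQ0 : ∀ p, 0 ≤ Q p := fun p => sq_nonneg _
  have hs0 : ∀ p, 0 ≤ s p := fun p => sq_nonneg _
  -- integrability of s
  have hsmeas : AEStronglyMeasurable s (μ.prod ν) := by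
    apply AEStronglyMeasurable.pow
    exact (Real.continuous_sqrt.comp_aestronglyMeasurable hpiHat.1).sub
      (Real.continuous_sqrt.comp_aestronglyMeasurable hpi.1)
  have hsint : Integrable s (μ.prod ν) := by
    refine (hpiHat.add hpi).mono' hsmeas (Filter.Eventually.of_forall fun p => ?_)
    rw [Real.norm_of_nonneg (hs0 p)]
    simp only [hs, Pi.add_apply]
    have h1 := Real.sq_sqrt (hpiHat0 p)
    have h2 := Real.sq_sqrt (hpi0 p)
    nlinarith [mul_nonneg (Real.sqrt_nonneg (piHat p)) (Real.sqrt_nonneg (pi p))]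
  -- pointwise identity
  have hQeq : ∀ p : X × Θ × X, Q p = s (p.2.2, p.2.1) * (f p.1 p.2.2 p.2.1 * g p.1) := by
    intro p
    have := sqrt_mul_sub_sq (piHat (p.2.2, p.2.1)) (pi (p.2.2, p.2.1))
      (f p.1 p.2.2 p.2.1 * g p.1) (hpiHat0 _) (hpi0 _)
      (mul_nonneg (hf0 _ _ _) (hg0 _))
    simpa [hQ, hs, mul_assoc] using this
  -- lintegrals
  set L : ENNReal := ∫⁻ p, ENNReal.ofReal (Q p) ∂(μ.prod (ν.prod μ)) with hL
  set K : ENNReal := ∫⁻ p, ENNReal.ofReal (s p) ∂(μ.prod ν) with hK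
  have hQaem : AEMeasurable (fun p => ENNReal.ofReal (Q p)) (μ.prod (ν.prod μ)) :=
    ENNReal.measurable_ofReal.comp_aemeasurable hqint.1.aemeasurable
  have hsaem : AEMeasurable (fun p => ENNReal.ofReal (s p)) (μ.prod ν) :=
    ENNReal.measurable_ofReal.comp_aemeasurable hsint.1.aemeasurable
  -- key inequality L ≤ ofReal C * K
  have hLK : L ≤ ENNReal.ofReal C * K := by
    rw [hL, lintegral_prod_symm _ hQaem]
    have hstep : ∀ q : Θ × X,
        (∫⁻ x, ENNReal.ofReal (Q (x, q)) ∂μ)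
          ≤ ENNReal.ofReal (s (q.2, q.1)) * ENNReal.ofReal C := by
      intro q
      have : ∀ x, ENNReal.ofReal (Q (x, q))
          = ENNReal.ofReal (s (q.2, q.1)) * ENNReal.ofReal (f x q.2 q.1 * g x) := by
        intro x
        rw [hQeq (x, q), ENNReal.ofReal_mul (hs0 _)]
      rw [lintegral_congr this, lintegral_const_mul' _ _ ENNReal.ofReal_ne_top,
        ← ofReal_integral_eq_lintegral_ofReal (hfgint q.2 q.1)
          (Filter.Eventually.of_forall fun x => mul_nonneg (hf0 _ _ _) (hg0 _))]
      exact mul_le_mul_right (ENNReal.ofReal_le_ofReal (hC q.2 q.1)) _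
    calc ∫⁻ q, (∫⁻ x, ENNReal.ofReal (Q (x, q)) ∂μ) ∂(ν.prod μ)
        ≤ ∫⁻ q, ENNReal.ofReal (s (q.2, q.1)) * ENNReal.ofReal C ∂(ν.prod μ) :=
          lintegral_mono hstep
      _ = (∫⁻ q, ENNReal.ofReal (s (q.2, q.1)) ∂(ν.prod μ)) * ENNReal.ofReal C :=
          lintegral_mul_const' _ _ ENNReal.ofReal_ne_top
      _ = K * ENNReal.ofReal C := by
          congr 1
          have haem2 : AEMeasurable (fun q : Θ × X => ENNReal.ofReal (s (q.2, q.1)))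
              (ν.prod μ) := by
            have : AEMeasurable (fun q : Θ × X => ENNReal.ofReal (s q.swap)) (ν.prod μ) :=
              AEMeasurable.prod_swap hsaem
            simpa [Prod.swap] using this
          rw [hK, lintegral_prod _ haem2, lintegral_prod_symm _ hsaem]
      _ = ENNReal.ofReal C * K := mul_comm _ _
  -- relate real integrals to lintegrals
  have hIdent : ∫ p, Q p ∂(μ.prod (ν.prod μ)) = L.toReal := by
    rw [hL, integral_eq_lintegral_of_nonneg_ae (Filter.Eventually.of_forall hQ0) hqint.1]
  have hKfin : K = ENNReal.ofReal (∫ p, s p ∂(μ.prod ν)) :=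
    (ofReal_integral_eq_lintegral_ofReal hsint (Filter.Eventually.of_forall hs0)).symm
  have hJ0 : 0 ≤ ∫ p, s p ∂(μ.prod ν) := integral_nonneg hs0
  have hmain : ∫ p, Q p ∂(μ.prod (ν.prod μ)) ≤ C * ∫ p, s p ∂(μ.prod ν) := by
    rw [hIdent]
    calc L.toReal ≤ (ENNReal.ofReal C * K).toReal := by
          apply ENNReal.toReal_mono _ hLK
          rw [hKfin]
          exact ENNReal.mul_ne_top ENNReal.ofReal_ne_top ENNReal.ofReal_ne_top
      _ = C * ∫ p, s p ∂(μ.prod ν) := by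
          rw [hKfin, ← ENNReal.ofReal_mul hC0, ENNReal.toReal_ofReal
            (mul_nonneg hC0 hJ0)]
  calc Real.sqrt (∫ p, Q p ∂(μ.prod (ν.prod μ)))
      ≤ Real.sqrt (C * ∫ p, s p ∂(μ.prod ν)) := Real.sqrt_le_sqrt hmain
    _ = Real.sqrt C * Real.sqrt (∫ p, s p ∂(μ.prod ν)) := Real.sqrt_mul hC0 _
end

section
/- Combining the recursive L² bound with the Hellinger bound: if ‖√π̂_t − √π_t‖_{L²} ≤ √2 Σ_{k=1}^t C^{(t−k)/2} ε_k and p_t = π_t/z_t, p̂_t = π̂_t/ẑ_t with z_t = ∫π_t > 0, then the Hellinger distance satisfies d_H(p̂_t, p_t) ≤ (2/√z_t)·Σ_{k=1}^t C^{(t−k)/2} ε_k. -/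
open MeasureTheory

lemma sqrt_integral_sq_eq_norm_toLp {X : Type*} [MeasurableSpace X] {μ : Measure X}
    {h : X → ℝ} (hh : MemLp h 2 μ) :
    Real.sqrt (∫ x, h x ^ 2 ∂μ) = ‖hh.toLp h‖ := by
  have key : ‖hh.toLp h‖ ^ 2 = ∫ x, h x ^ 2 ∂μ := by
    rw [← real_inner_self_eq_norm_sq, L2.inner_def]
    refine integral_congr_ae ?_
    filter_upwards [hh.coeFn_toLp] with x hx
    simp [hx, sq]
  rw [← key, Real.sqrt_sq (norm_nonneg _)]

/-- Combining the recursive L² bound with the Hellinger bound: if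
`‖√piHat_t − √pi_t‖_{L²} ≤ √2 Σ_{k=1}^t C^{(t−k)/2} ε_k`, then the Hellinger
distance between `p_t = pi_t/z_t` and `pHat_t = piHat_t/zHat_t` satisfies
`d_H(pHat_t, p_t) ≤ (2/√z_t) Σ_{k=1}^t C^{(t−k)/2} ε_k`. -/
theorem stmt9 {X : Type*} [MeasurableSpace X] (μ : Measure X)
    (pit piHatt : X → ℝ) (C : ℝ) (hC : 0 < C) (ε : ℕ → ℝ)
    (hε : ∀ k, 1 ≤ k → 0 ≤ ε k) (t : ℕ) (ht : 1 ≤ t)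
    (hpi0 : ∀ x, 0 ≤ pit x) (hpiHat0 : ∀ x, 0 ≤ piHatt x)
    (hpiint : Integrable pit μ) (hpiHatint : Integrable piHatt μ)
    (z zHat : ℝ) (hz : z = ∫ x, pit x ∂μ) (hzHat : zHat = ∫ x, piHatt x ∂μ)
    (hzpos : 0 < z) (hzHatpos : 0 < zHat)
    (hL2 : Real.sqrt (∫ x, (Real.sqrt (piHatt x) - Real.sqrt (pit x)) ^ 2 ∂μ)
      ≤ Real.sqrt 2 * ∑ k ∈ Finset.Icc 1 t, C ^ (((t : ℝ) - (k : ℝ)) / 2) * ε k) :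
    (1 / Real.sqrt 2) *
        Real.sqrt (∫ x, (Real.sqrt (piHatt x / zHat) - Real.sqrt (pit x / z)) ^ 2 ∂μ)
      ≤ (2 / Real.sqrt z) *
        ∑ k ∈ Finset.Icc 1 t, C ^ (((t : ℝ) - (k : ℝ)) / 2) * ε k := by
  set S := ∑ k ∈ Finset.Icc 1 t, C ^ (((t : ℝ) - (k : ℝ)) / 2) * ε k with hS
  set f : X → ℝ := fun x => Real.sqrt (piHatt x) with hfdef
  set g : X → ℝ := fun x => Real.sqrt (pit x) with hgdef
  have hsz : 0 < Real.sqrt z := Real.sqrt_pos.mpr hzpos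
  have hszH : 0 < Real.sqrt zHat := Real.sqrt_pos.mpr hzHatpos
  have hfm : AEStronglyMeasurable f μ :=
    Real.continuous_sqrt.comp_aestronglyMeasurable hpiHatint.aestronglyMeasurable
  have hgm : AEStronglyMeasurable g μ :=
    Real.continuous_sqrt.comp_aestronglyMeasurable hpiint.aestronglyMeasurable
  have hf : MemLp f 2 μ := by
    rw [memLp_two_iff_integrable_sq hfm]
    refine hpiHatint.congr (Filter.Eventually.of_forall fun x => ?_)
    simp [hfdef, Real.sq_sqrt (hpiHat0 x)]
  have hg : MemLp g 2 μ := by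
    rw [memLp_two_iff_integrable_sq hgm]
    refine hpiint.congr (Filter.Eventually.of_forall fun x => ?_)
    simp [hgdef, Real.sq_sqrt (hpi0 x)]
  set a : ℝ := (Real.sqrt zHat)⁻¹ with ha
  set b : ℝ := (Real.sqrt z)⁻¹ with hb
  have hfa : MemLp (a • f) 2 μ := hf.const_smul a
  have hgb : MemLp (b • g) 2 μ := hg.const_smul b
  have hsub : MemLp (a • f - b • g) 2 μ := hfa.sub hgb
  -- rewrite the integrand
  have hint_eq : (∫ x, (Real.sqrt (piHatt x / zHat) - Real.sqrt (pit x / z)) ^ 2 ∂μ)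
      = ∫ x, ((a • f - b • g) x) ^ 2 ∂μ := by
    refine integral_congr_ae (Filter.Eventually.of_forall fun x => ?_)
    have h1 : Real.sqrt (piHatt x / zHat) = a * f x := by
      rw [Real.sqrt_div (hpiHat0 x), div_eq_inv_mul]
    have h2 : Real.sqrt (pit x / z) = b * g x := by
      rw [Real.sqrt_div (hpi0 x), div_eq_inv_mul]
    simp [h1, h2, Pi.sub_apply, smul_eq_mul]
  set F := hf.toLp f with hF
  set G := hg.toLp g with hG
  have hFF : ‖F‖ = Real.sqrt zHat := by
    rw [← sqrt_integral_sq_eq_norm_toLp hf]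
    congr 1
    rw [hzHat]
    refine integral_congr_ae (Filter.Eventually.of_forall fun x => ?_)
    simp [hfdef, Real.sq_sqrt (hpiHat0 x)]
  have hGG : ‖G‖ = Real.sqrt z := by
    rw [← sqrt_integral_sq_eq_norm_toLp hg]
    congr 1
    rw [hz]
    refine integral_congr_ae (Filter.Eventually.of_forall fun x => ?_)
    simp [hgdef, Real.sq_sqrt (hpi0 x)]
  have hFG : ‖F - G‖ ≤ Real.sqrt 2 * S := by
    have heq : Real.sqrt (∫ x, ((f - g) x) ^ 2 ∂μ) = ‖F - G‖ := by
      rw [sqrt_integral_sq_eq_norm_toLp (hf.sub hg), MemLp.toLp_sub hf hg]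
    have hint : (∫ x, (Real.sqrt (piHatt x) - Real.sqrt (pit x)) ^ 2 ∂μ)
        = ∫ x, ((f - g) x) ^ 2 ∂μ := by
      refine integral_congr_ae (Filter.Eventually.of_forall fun x => ?_)
      simp [hfdef, hgdef]
    rw [hint, heq] at hL2
    exact hL2
  -- main norm computation
  have hmain : ‖a • F - b • G‖ ≤ (2 / Real.sqrt z) * ‖F - G‖ := by
    have tri : ‖a • F - b • G‖ ≤ ‖(a - b) • F‖ + ‖b • (F - G)‖ := by
      have : a • F - b • G = (a - b) • F + b • (F - G) := by
        rw [sub_smul, smul_sub]; abel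
      rw [this]
      exact norm_add_le _ _
    have h1 : ‖(a - b) • F‖ = |a - b| * Real.sqrt zHat := by
      rw [norm_smul, hFF, Real.norm_eq_abs]
    have h2 : ‖b • (F - G)‖ = b * ‖F - G‖ := by
      rw [norm_smul, Real.norm_eq_abs, abs_of_pos (by positivity)]
    have habdiff : |a - b| * Real.sqrt zHat ≤ (1 / Real.sqrt z) * ‖F - G‖ := by
      have hab : |a - b| = |Real.sqrt z - Real.sqrt zHat| / (Real.sqrt zHat * Real.sqrt z) := by
        rw [ha, hb, inv_sub_inv hszH.ne' hsz.ne', abs_div,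
          abs_of_pos (mul_pos hszH hsz)]
      have hrev : |Real.sqrt z - Real.sqrt zHat| ≤ ‖F - G‖ := by
        have := abs_norm_sub_norm_le G F
        rw [hGG, hFF] at this
        calc |Real.sqrt z - Real.sqrt zHat| ≤ ‖G - F‖ := this
          _ = ‖F - G‖ := norm_sub_rev _ _
      rw [hab, div_mul_eq_mul_div, mul_comm (Real.sqrt zHat) (Real.sqrt z),
        mul_div_mul_right _ _ hszH.ne']
      calc |Real.sqrt z - Real.sqrt zHat| / Real.sqrt z
          ≤ ‖F - G‖ / Real.sqrt z := by gcongr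
        _ = (1 / Real.sqrt z) * ‖F - G‖ := by ring
    have hbterm : b * ‖F - G‖ = (1 / Real.sqrt z) * ‖F - G‖ := by
      rw [hb, one_div]
    calc ‖a • F - b • G‖ ≤ |a - b| * Real.sqrt zHat + b * ‖F - G‖ := by
          rw [← h1, ← h2]; exact tri
      _ ≤ (1 / Real.sqrt z) * ‖F - G‖ + (1 / Real.sqrt z) * ‖F - G‖ := by
          rw [hbterm]; exact add_le_add_left habdiff _
      _ = (2 / Real.sqrt z) * ‖F - G‖ := by ring
  -- put everything together
  have hLHS : Real.sqrt (∫ x, (Real.sqrt (piHatt x / zHat) - Real.sqrt (pit x / z)) ^ 2 ∂μ)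
      = ‖a • F - b • G‖ := by
    rw [hint_eq, sqrt_integral_sq_eq_norm_toLp hsub, MemLp.toLp_sub hfa hgb,
      MemLp.toLp_const_smul a hf, MemLp.toLp_const_smul b hg]
  rw [hLHS]
  have step : ‖a • F - b • G‖ ≤ (2 / Real.sqrt z) * (Real.sqrt 2 * S) :=
    hmain.trans (mul_le_mul_of_nonneg_left hFG (by positivity))
  have h2pos : (0:ℝ) < Real.sqrt 2 := by positivity
  calc (1 / Real.sqrt 2) * ‖a • F - b • G‖
      ≤ (1 / Real.sqrt 2) * ((2 / Real.sqrt z) * (Real.sqrt 2 * S)) :=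
        mul_le_mul_of_nonneg_left step (by positivity)
    _ = (2 / Real.sqrt z) * S := by
        field_simp
end
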